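/- In the orthogonal setting, for all a, b, c, d ∈ V and every X ∈ gl(V)_B one has ⁅D_{a,b}, ⁅D_{c,d}, X⁆⁆ = B(b, Xd)·D_{c,a} − B(a, Xd)·D_{c,b} − B(b, Xc)·D_{d,a} + B(a, Xc)·D_{d,b} + B(b,d)·D_{Xc,a} − B(a,d)·D_{Xc,b} − B(b,c)·D_{Xd,a} + B(a,c)·D_{Xd,b}. -/
import Mathlib


/-- The endomorphism `D_{a,b} : x ↦ B(x,a)·b − B(x,b)·a` of the orthogonal setting. -/
def DOrth {k V : Type*} [Field k] [AddCommGroup V] [Module k V]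
    (B : LinearMap.BilinForm k V) (a b : V) : Module.End k V :=
  (B.flip a).smulRight b - (B.flip b).smulRight a

/-- In the orthogonal setting, for every `X ∈ gl(V)_B`:
`⁅D_{a,b}, ⁅D_{c,d}, X⁆⁆ = B(b,Xd)·D_{c,a} − B(a,Xd)·D_{c,b} − B(b,Xc)·D_{d,a}
  + B(a,Xc)·D_{d,b} + B(b,d)·D_{Xc,a} − B(a,d)·D_{Xc,b} − B(b,c)·D_{Xd,a}
  + B(a,c)·D_{Xd,b}`. -/
theorem stmt15 {k V : Type*} [Field k] [AddCommGroup V] [Module k V]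
    (hchar : (2 : k) ≠ 0)
    (B : LinearMap.BilinForm k V) (hsymm : ∀ u v : V, B u v = B v u)
    (a b c d : V) :
    ∀ X : Module.End k V, (∀ u v : V, B (X u) v = -B u (X v)) →
      ⁅DOrth B a b, ⁅DOrth B c d, X⁆⁆ =
        B b (X d) • DOrth B c a - B a (X d) • DOrth B c b
          - B b (X c) • DOrth B d a + B a (X c) • DOrth B d b
          + B b d • DOrth B (X c) a - B a d • DOrth B (X c) b
          - B b c • DOrth B (X d) a + B a c • DOrth B (X d) b := by
  intro X hX
  ext x
  simp only [DOrth, LinearMap.sub_apply, LinearMap.smulRight_apply, LinearMap.flip_apply,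
    Module.End.lie_apply, LieRing.of_associative_ring_bracket, Module.End.mul_apply,
    LinearMap.smul_apply, LinearMap.add_apply, map_sub, map_smul, map_add, smul_sub, smul_smul,
    hX, map_neg, neg_smul, smul_neg]
  have hX' : ∀ u v : V, B u (X v) = -B v (X u) := fun u v => by rw [hsymm, hX]
  have hf : ∀ u v : V, B.flip u v = B v u := fun u v => rfl
  simp only [hf, hX, neg_smul, neg_neg, neg_mul, mul_neg, smul_neg]
  simp only [hX' d a, hX' c a, hX' d b, hX' c b, hsymm d a, hsymm c a, hsymm d b, hsymm c b,
    neg_mul, mul_neg, neg_neg, neg_smul, smul_neg]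
  module
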